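/- Let g be a continuous real-valued path on an interval I = [ℓ₁, ℓ₂], and let (y, m) ∈ C(I; ℝ_{≥0}) × V¹_1(I; ℝ_{≥0}) be a solution of the Skorohod problem associated with g in ℝ_{≥0}. Then for all s ≤ t in I one has |y_t − y_s|² ≤ |g_t − g_s|² + 2 ∫_s^t (g_t − g_u) dm_u. In particular |y_t − y_s|² ≤ ‖g‖²_{0,[s,t]} + 2 ‖g‖_{0,[s,t]} (m_t − m_s), where ‖g‖_{0,[s,t]} := sup_{s ≤ u < v ≤ t} |g_v − g_u|. -/

import Mathlib

open MeasureTheory Set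

noncomputable section

/-- `(y, m)` (with Stieltjes measure `μ` of `m`) solves the Skorohod problem associated
with the continuous path `g` on `[ℓ₁,ℓ₂]` in the domain `ℝ_{≥0}`: `y ≥ 0`, `m` is a
nondecreasing continuous path starting at `0`, `δy = δg + δm`, `y_{ℓ₁} = g_{ℓ₁}`, and
the measure `dm` is carried by the set where `y` vanishes. -/
def SolvesSkorohod (ℓ₁ ℓ₂ : ℝ) (g y m : ℝ → ℝ) (μ : Measure ℝ) : Prop :=
  ContinuousOn y (Set.Icc ℓ₁ ℓ₂) ∧ (∀ t ∈ Set.Icc ℓ₁ ℓ₂, 0 ≤ y t) ∧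
  ContinuousOn m (Set.Icc ℓ₁ ℓ₂) ∧ MonotoneOn m (Set.Icc ℓ₁ ℓ₂) ∧
  m ℓ₁ = 0 ∧ (∀ t ∈ Set.Icc ℓ₁ ℓ₂, 0 ≤ m t) ∧
  y ℓ₁ = g ℓ₁ ∧
  (∀ s t, ℓ₁ ≤ s → s ≤ t → t ≤ ℓ₂ → y t - y s = (g t - g s) + (m t - m s)) ∧
  (∀ s t, ℓ₁ ≤ s → s ≤ t → t ≤ ℓ₂ → μ (Set.Ioc s t) = ENNReal.ofReal (m t - m s)) ∧
  μ {u | u ∈ Set.Ioc ℓ₁ ℓ₂ ∧ y u ≠ 0} = 0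

/-- `‖g‖_{0,[s,t]} := sup_{s ≤ u ≤ v ≤ t} |g_v - g_u|`, the oscillation of `g` on `[s,t]`. -/
def oscNorm (s t : ℝ) (g : ℝ → ℝ) : ℝ :=
  sSup {x | ∃ u v, s ≤ u ∧ u ≤ v ∧ v ≤ t ∧ x = |g v - g u|}

/-- Symmetry/Fubini bound: `2 ∫ ν(Ioi u) dν(u) ≤ (ν univ)²`. -/
private lemma fubini_half_aux (ν : Measure ℝ) [IsFiniteMeasure ν] :
    2 * ∫⁻ u, ν (Set.Ioi u) ∂ν ≤ ν Set.univ * ν Set.univ := by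
  have hA : MeasurableSet {p : ℝ × ℝ | p.1 < p.2} :=
    measurableSet_lt measurable_fst measurable_snd
  have hB : MeasurableSet {p : ℝ × ℝ | p.2 < p.1} :=
    measurableSet_lt measurable_snd measurable_fst
  have h1 : (ν.prod ν) {p : ℝ × ℝ | p.1 < p.2} = ∫⁻ u, ν (Set.Ioi u) ∂ν := by
    rw [Measure.prod_apply hA]
    exact lintegral_congr fun u => rfl
  have h2 : (ν.prod ν) {p : ℝ × ℝ | p.2 < p.1} = (ν.prod ν) {p : ℝ × ℝ | p.1 < p.2} := by
    conv_lhs => rw [show (ν.prod ν) = Measure.map Prod.swap (ν.prod ν) from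
      (Measure.prod_swap).symm]
    rw [Measure.map_apply measurable_swap hB]
    rfl
  have hdisj : Disjoint {p : ℝ × ℝ | p.1 < p.2} {p : ℝ × ℝ | p.2 < p.1} := by
    rw [Set.disjoint_left]
    intro p hp1 hp2
    simp only [Set.mem_setOf_eq] at hp1 hp2
    exact lt_asymm hp1 hp2
  calc 2 * ∫⁻ u, ν (Set.Ioi u) ∂ν
      = (ν.prod ν) {p : ℝ × ℝ | p.1 < p.2} + (ν.prod ν) {p : ℝ × ℝ | p.2 < p.1} := by
        rw [h2, ← h1, two_mul]
    _ = (ν.prod ν) ({p : ℝ × ℝ | p.1 < p.2} ∪ {p : ℝ × ℝ | p.2 < p.1}) :=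
        (measure_union hdisj hB).symm
    _ ≤ (ν.prod ν) Set.univ := measure_mono (Set.subset_univ _)
    _ = ν Set.univ * ν Set.univ := by rw [← Set.univ_prod_univ, Measure.prod_prod]

/-- **Energy estimate for the one-dimensional Skorohod problem** (from the proof of
Lemma 4.2): if `(y, m)` solves the Skorohod problem associated with a continuous path `g`
on `I = [ℓ₁, ℓ₂]` in `ℝ_{≥0}`, then for all `s ≤ t` in `I`,
`|δy_{st}|² ≤ |δg_{st}|² + 2 ∫_s^t (g_t - g_u) dm_u`, and in particular
`|δy_{st}|² ≤ ‖g‖²_{0,[s,t]} + 2 ‖g‖_{0,[s,t]} δm_{st}`. -/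
theorem skorohod_energy_estimate (ℓ₁ ℓ₂ : ℝ) (hl : ℓ₁ ≤ ℓ₂)
    (g y m : ℝ → ℝ) (hg : ContinuousOn g (Set.Icc ℓ₁ ℓ₂))
    (μ : Measure ℝ) (hsol : SolvesSkorohod ℓ₁ ℓ₂ g y m μ) :
    ∀ s t, ℓ₁ ≤ s → s ≤ t → t ≤ ℓ₂ →
      |y t - y s| ^ 2 ≤ |g t - g s| ^ 2 + 2 * ∫ u in Set.Ioc s t, (g t - g u) ∂μ ∧
      |y t - y s| ^ 2 ≤ oscNorm s t g ^ 2 + 2 * oscNorm s t g * (m t - m s) := by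
  obtain ⟨hy_cont, hy_nonneg, hm_cont, hm_mono, hm0, hm_nonneg, hy0, hdyn, hμIoc, hcarry⟩ := hsol
  intro s t hs hst ht
  have hsI : s ∈ Set.Icc ℓ₁ ℓ₂ := ⟨hs, hst.trans ht⟩
  have htI : t ∈ Set.Icc ℓ₁ ℓ₂ := ⟨hs.trans hst, ht⟩
  have hsubIcc : Set.Ioc s t ⊆ Set.Icc ℓ₁ ℓ₂ := fun u hu =>
    ⟨hs.trans hu.1.le, hu.2.trans ht⟩
  set ν := μ.restrict (Set.Ioc s t) with hν
  have hδm : 0 ≤ m t - m s := sub_nonneg.2 (hm_mono hsI htI hst)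
  have hνuniv : ν Set.univ = ENNReal.ofReal (m t - m s) := by
    rw [hν, Measure.restrict_apply MeasurableSet.univ, Set.univ_inter, hμIoc s t hs hst ht]
  haveI : IsFiniteMeasure ν := ⟨by rw [hνuniv]; exact ENNReal.ofReal_lt_top⟩
  -- oscillation norm facts
  obtain ⟨C, hC⟩ := (isCompact_Icc : IsCompact (Set.Icc ℓ₁ ℓ₂)).exists_bound_of_continuousOn hg
  have hbdd : BddAbove {x | ∃ u v, s ≤ u ∧ u ≤ v ∧ v ≤ t ∧ x = |g v - g u|} := by
    refine ⟨2 * C, ?_⟩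
    rintro x ⟨u, v, h1, h2, h3, rfl⟩
    have hu : u ∈ Set.Icc ℓ₁ ℓ₂ := ⟨hs.trans h1, (h2.trans h3).trans ht⟩
    have hv : v ∈ Set.Icc ℓ₁ ℓ₂ := ⟨hs.trans (h1.trans h2), h3.trans ht⟩
    have := abs_sub (g v) (g u)
    have h4 := hC u hu
    have h5 := hC v hv
    simp only [Real.norm_eq_abs] at h4 h5
    calc |g v - g u| ≤ |g v| + |g u| := abs_sub _ _
      _ ≤ 2 * C := by linarith
  have h0mem : (0 : ℝ) ∈ {x | ∃ u v, s ≤ u ∧ u ≤ v ∧ v ≤ t ∧ x = |g v - g u|} :=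
    ⟨s, s, le_rfl, le_rfl, hst, by simp⟩
  have hosc_le : ∀ u v, s ≤ u → u ≤ v → v ≤ t → |g v - g u| ≤ oscNorm s t g :=
    fun u v h1 h2 h3 => le_csSup hbdd ⟨u, v, h1, h2, h3, rfl⟩
  have hosc_nonneg : 0 ≤ oscNorm s t g := le_csSup hbdd h0mem
  -- a.e. facts
  have hmem : ∀ᵐ u ∂ν, u ∈ Set.Ioc s t := ae_restrict_mem measurableSet_Ioc
  have hy_ae : ∀ᵐ u ∂ν, y u = 0 := by
    rw [ae_iff]
    have hsub : {u | ¬ y u = 0} ∩ Set.Ioc s t ⊆ {u | u ∈ Set.Ioc ℓ₁ ℓ₂ ∧ y u ≠ 0} := by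
      rintro u ⟨hu1, hu2⟩
      exact ⟨⟨lt_of_le_of_lt hs hu2.1, hu2.2.trans ht⟩, hu1⟩
    rw [hν, Measure.restrict_apply' measurableSet_Ioc]
    exact measure_mono_null hsub hcarry
  -- integrability
  have hm_meas : AEStronglyMeasurable (fun u => m t - m u) ν :=
    aestronglyMeasurable_const.sub
      ((hm_cont.mono hsubIcc).aestronglyMeasurable measurableSet_Ioc)
  have hm_bd : ∀ᵐ u ∂ν, ‖m t - m u‖ ≤ m t - m s := by
    filter_upwards [hmem] with u hu
    have h1 : m s ≤ m u := hm_mono hsI (hsubIcc hu) hu.1.le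
    have h2 : m u ≤ m t := hm_mono (hsubIcc hu) htI hu.2
    rw [Real.norm_eq_abs, abs_of_nonneg (by linarith)]
    linarith
  have hm_int : Integrable (fun u => m t - m u) ν :=
    (integrable_const (m t - m s)).mono' hm_meas hm_bd
  have hg_meas : AEStronglyMeasurable (fun u => g t - g u) ν :=
    aestronglyMeasurable_const.sub
      ((hg.mono hsubIcc).aestronglyMeasurable measurableSet_Ioc)
  have hg_bd : ∀ᵐ u ∂ν, ‖g t - g u‖ ≤ oscNorm s t g := by
    filter_upwards [hmem] with u hu
    rw [Real.norm_eq_abs]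
    exact hosc_le u t hu.1.le hu.2 le_rfl
  have hg_int : Integrable (fun u => g t - g u) ν :=
    (integrable_const (oscNorm s t g)).mono' hg_meas hg_bd
  have hconst : ∫ _u, y t ∂ν = (m t - m s) * y t := by
    rw [integral_const, measureReal_def, hνuniv, ENNReal.toReal_ofReal hδm, smul_eq_mul]
  -- key identity: ∫ (g t - g u) dν = (m t - m s) * y t - ∫ (m t - m u) dν
  have key : ∫ u, (g t - g u) ∂ν = (m t - m s) * y t - ∫ u, (m t - m u) ∂ν := by
    have hcongr : (fun u => g t - g u) =ᵐ[ν] fun u => y t - (m t - m u) := by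
      filter_upwards [hmem, hy_ae] with u hu hyu
      have h := hdyn u t (hs.trans hu.1.le) hu.2 ht
      linarith
    rw [integral_congr_ae hcongr, integral_sub (integrable_const (y t)) hm_int, hconst]
  -- Fubini bound on ∫ (m t - m u) dν
  have hIm : ∫ u, (m t - m u) ∂ν ≤ (m t - m s) ^ 2 / 2 := by
    have hpt : ∀ᵐ u ∂ν, ν (Set.Ioi u) = ENNReal.ofReal (m t - m u) := by
      filter_upwards [hmem] with u hu
      have hset : Set.Ioi u ∩ Set.Ioc s t = Set.Ioc u t := by
        ext v
        simp only [Set.mem_inter_iff, Set.mem_Ioi, Set.mem_Ioc]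
        constructor
        · rintro ⟨h1, _, h3⟩; exact ⟨h1, h3⟩
        · rintro ⟨h1, h2⟩; exact ⟨h1, hu.1.trans h1, h2⟩
      rw [hν, Measure.restrict_apply measurableSet_Ioi, hset,
        hμIoc u t (hs.trans hu.1.le) hu.2 ht]
    have hl := fubini_half_aux ν
    rw [show ∫⁻ u, ν (Set.Ioi u) ∂ν = ∫⁻ u, ENNReal.ofReal (m t - m u) ∂ν from
      lintegral_congr_ae hpt] at hl
    have hnn : 0 ≤ᵐ[ν] fun u => m t - m u := by
      filter_upwards [hmem] with u hu
      have := hm_mono (hsubIcc hu) htI hu.2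
      simp only [Pi.zero_apply]
      linarith
    have heq : ∫ u, (m t - m u) ∂ν = (∫⁻ u, ENNReal.ofReal (m t - m u) ∂ν).toReal :=
      integral_eq_lintegral_of_nonneg_ae hnn hm_meas
    rw [hνuniv, ← ENNReal.ofReal_mul hδm] at hl
    have hfin : ENNReal.ofReal ((m t - m s) * (m t - m s)) ≠ ⊤ := ENNReal.ofReal_ne_top
    have htr := ENNReal.toReal_mono hfin hl
    rw [ENNReal.toReal_mul, ENNReal.toReal_ofReal (mul_nonneg hδm hδm)] at htr
    have h2 : (2 : ENNReal).toReal = 2 := by norm_num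
    rw [h2] at htr
    rw [heq]
    nlinarith [htr]
  -- statement integral equals ∫ dν
  have hys : 0 ≤ y s := hy_nonneg s hsI
  have hyt : 0 ≤ y t := hy_nonneg t htI
  have hEq := hdyn s t hs hst ht
  have hstmt : (∫ u in Set.Ioc s t, (g t - g u) ∂μ) = ∫ u, (g t - g u) ∂ν := rfl
  have hineq1 : |y t - y s| ^ 2 ≤ |g t - g s| ^ 2 + 2 * ∫ u in Set.Ioc s t, (g t - g u) ∂μ := by
    rw [hstmt, key]
    nlinarith [sq_abs (y t - y s), sq_abs (g t - g s), hIm, mul_nonneg hδm hys, hEq]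
  refine ⟨hineq1, ?_⟩
  have habs : |g t - g s| ≤ oscNorm s t g := hosc_le s t le_rfl hst le_rfl
  have hintle : ∫ u, (g t - g u) ∂ν ≤ oscNorm s t g * (m t - m s) := by
    have hle : ∫ u, (g t - g u) ∂ν ≤ ∫ _u, oscNorm s t g ∂ν := by
      refine integral_mono_ae hg_int (integrable_const _) ?_
      filter_upwards [hg_bd] with u hu
      exact (le_abs_self _).trans (by simpa [Real.norm_eq_abs] using hu)
    rw [integral_const, measureReal_def, hνuniv, ENNReal.toReal_ofReal hδm, smul_eq_mul] at hle
    linarith [hle]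
  have hg2 : |g t - g s| ^ 2 ≤ oscNorm s t g ^ 2 := by
    nlinarith [abs_nonneg (g t - g s)]
  calc |y t - y s| ^ 2 ≤ |g t - g s| ^ 2 + 2 * ∫ u in Set.Ioc s t, (g t - g u) ∂μ := hineq1
    _ ≤ oscNorm s t g ^ 2 + 2 * oscNorm s t g * (m t - m s) := by
        rw [hstmt]
        nlinarith [hintle]

end
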